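/- Let (Ω, ℱ, ℙ) be a probability space, let n ≥ 2 be an integer, and let A be a real number with 0 < A ≤ n²; set t = n²/A (so t ≥ 1). Let ε be a real number with 0 < ε < 1/2, and set d = 1/(ε·t^{1/3}). Let k₀ and k be natural numbers with (k₀ : ℝ) = ε·t^{2/3} and k ≥ k₀. Let X_1, X_2, … be independent identically distributed square-integrable real-valued random variables on Ω, each with mean E[X_i] = A/n and variance Var[X_i] = (n−1)A²/(n²(n+1)). Then the probability of the event that Σ_{i=1}^{k₀} X_i ≥ n or |(n/k)·Σ_{i=1}^{k} X_i − A| ≥ d·A is at most 2ε. In particular, with probability at least 1 − 2ε the algorithm (with threshold parameter c = 1) estimates A = BC(v) within a factor of 1/(ε·t^{1/3}) using ε·t^{2/3} samples. -/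

import Mathlib

open MeasureTheory ProbabilityTheory

set_option maxHeartbeats 1600000 in
theorem adaptive_sampling_main_c_one
    {Ω : Type*} [MeasureSpace Ω] [IsProbabilityMeasure (ℙ : Measure Ω)]
    (n : ℕ) (hn : 2 ≤ n) (A : ℝ) (hA0 : 0 < A) (hA : A ≤ (n : ℝ) ^ 2)
    (t : ℝ) (ht : t = (n : ℝ) ^ 2 / A)
    (ε : ℝ) (hε0 : 0 < ε) (hε : ε < 1 / 2)
    (d : ℝ) (hd : d = 1 / (ε * t ^ ((1 : ℝ) / 3)))
    (k₀ k : ℕ) (hk₀ : (k₀ : ℝ) = ε * t ^ ((2 : ℝ) / 3)) (hk : k₀ ≤ k)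
    (X : ℕ → Ω → ℝ)
    (hmeas : ∀ i, Measurable (X i))
    (hL2 : ∀ i, MemLp (X i) 2 ℙ)
    (hindep : iIndepFun X ℙ)
    (hid : ∀ i j, IdentDistrib (X i) (X j) ℙ ℙ)
    (hmean : ∀ i, (∫ ω, X i ω ∂ℙ) = A / n)
    (hvar : ∀ i, variance (X i) ℙ =
      ((n : ℝ) - 1) * A ^ 2 / ((n : ℝ) ^ 2 * ((n : ℝ) + 1))) :
    ℙ {ω | (n : ℝ) ≤ ∑ i ∈ Finset.range k₀, X i ω ∨
        d * A ≤ |((n : ℝ) / k) * ∑ i ∈ Finset.range k, X i ω - A|} ≤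
      ENNReal.ofReal (2 * ε) := by
  have hn2 : (2:ℝ) ≤ (n:ℝ) := by exact_mod_cast hn
  have hn0 : (0:ℝ) < (n:ℝ) := by linarith
  have ht0 : 0 < t := by rw [ht]; positivity
  have ht1 : 1 ≤ t := by rw [ht, le_div_iff₀ hA0]; linarith
  obtain ⟨p, hp⟩ : ∃ p, p = t ^ ((1:ℝ)/3) := ⟨_, rfl⟩
  have hp1 : 1 ≤ p := hp ▸ Real.one_le_rpow ht1 (by norm_num)
  have hp0 : 0 < p := lt_of_lt_of_le one_pos hp1
  have hp3 : p ^ 3 = t := by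
    rw [hp, ← Real.rpow_natCast (t ^ ((1:ℝ)/3)) 3, ← Real.rpow_mul ht0.le]
    norm_num
  have ht23 : t ^ ((2:ℝ)/3) = p ^ 2 := by
    rw [hp, ← Real.rpow_natCast (t ^ ((1:ℝ)/3)) 2, ← Real.rpow_mul ht0.le]
    norm_num

  have hk₀' : (k₀:ℝ) = ε * p ^ 2 := by rw [hk₀, ht23]
  have hk₀pos : 0 < k₀ := by
    rcases Nat.eq_zero_or_pos k₀ with h0 | h0
    · exfalso
      rw [h0, Nat.cast_zero] at hk₀'
      have hpos : (0:ℝ) < ε * p ^ 2 := by positivity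
      linarith
    · exact h0
  have h1 : 1 ≤ ε * p ^ 2 := by
    rw [← hk₀']
    exact_mod_cast hk₀pos
  have hd' : d = 1 / (ε * p) := by rw [hd, hp]
  clear hd
  have hd := hd'
  have hd0 : 0 < d := by rw [hd']; positivity
  have hAeq : A = (n:ℝ)^2 / p^3 := by
    rw [hp3, ht]
    field_simp
  have hkey : 1 ≤ p^2 - ε*p := by nlinarith [sq_nonneg (p - 1), sq_nonneg p]
  have hεp : ε < p := by linarith
  -- variance abbreviation
  obtain ⟨v, hv⟩ : ∃ v : ℝ, v = ((n : ℝ) - 1) * A ^ 2 / ((n : ℝ) ^ 2 * ((n : ℝ) + 1)) := ⟨_, rfl⟩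
  have hv0 : 0 ≤ v := by
    rw [hv]
    apply div_nonneg
    · apply mul_nonneg (by linarith) (sq_nonneg A)
    · positivity
  have hvle : v ≤ A^2 / (n:ℝ)^2 := by
    rw [hv, div_le_div_iff₀ (by positivity) (by positivity)]
    nlinarith [sq_nonneg A]
  -- sum facts
  have hSmem : ∀ m : ℕ, MemLp (∑ i ∈ Finset.range m, X i) 2 ℙ :=
    fun m => memLp_finset_sum' _ (fun i _ => hL2 i)
  have hSmean : ∀ m : ℕ, (∫ ω, ∑ i ∈ Finset.range m, X i ω ∂ℙ) = m * (A/n) := by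
    intro m
    rw [integral_finset_sum _ (fun i _ => (hL2 i).integrable one_le_two)]
    simp [hmean, Finset.sum_const, nsmul_eq_mul]
  have hSvar : ∀ m : ℕ, variance (∑ i ∈ Finset.range m, X i) ℙ = m * v := by
    intro m
    rw [IndepFun.variance_sum (fun i _ => hL2 i)
      (fun i _ j _ hij => hindep.indepFun hij)]
    simp [hvar, Finset.sum_const, nsmul_eq_mul, ← hv]
  have cheb : ∀ (m : ℕ) (c : ℝ), 0 < c →
      ℙ {ω | c ≤ |∑ i ∈ Finset.range m, X i ω - m * (A/n)|} ≤
      ENNReal.ofReal ((m : ℝ) * v / c ^ 2) := by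
    intro m c hc
    have h := meas_ge_le_variance_div_sq (μ := ℙ) (hSmem m) hc
    rw [hSvar m] at h
    simp only [Finset.sum_apply] at h
    rw [hSmean m] at h
    exact h
  -- constants
  obtain ⟨c₁, hc₁⟩ : ∃ c : ℝ, c = (n:ℝ) - (k₀:ℝ) * (A/n) := ⟨_, rfl⟩
  obtain ⟨c₂, hc₂⟩ : ∃ c : ℝ, c = d * A * k / n := ⟨_, rfl⟩
  have hc₁eq : c₁ = (n:ℝ) * (p - ε) / p := by
    rw [hc₁, hk₀', hAeq]
    field_simp
  have hc₁pos : 0 < c₁ := by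
    rw [hc₁eq]
    apply div_pos _ hp0
    exact mul_pos hn0 (by linarith)
  have hkpos : (0:ℝ) < k := by
    have : 0 < k := lt_of_lt_of_le hk₀pos hk
    exact_mod_cast this
  have hc₂pos : 0 < c₂ := by
    rw [hc₂]; positivity
  -- event inclusion
  have hsub : {ω | (n : ℝ) ≤ ∑ i ∈ Finset.range k₀, X i ω ∨
        d * A ≤ |((n : ℝ) / k) * ∑ i ∈ Finset.range k, X i ω - A|} ⊆
      {ω | c₁ ≤ |∑ i ∈ Finset.range k₀, X i ω - k₀ * (A/n)|} ∪
      {ω | c₂ ≤ |∑ i ∈ Finset.range k, X i ω - k * (A/n)|} := by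
    intro ω hω
    rcases hω with h | h
    · left
      have : c₁ ≤ ∑ i ∈ Finset.range k₀, X i ω - k₀ * (A/n) := by
        rw [hc₁]; linarith
      exact le_trans this (le_abs_self _)
    · right
      have hkne : (k:ℝ) ≠ 0 := ne_of_gt hkpos
      have hnne : (n:ℝ) ≠ 0 := ne_of_gt hn0
      have heq0 : ((n:ℝ)/k) * (∑ i ∈ Finset.range k, X i ω - k * (A/n)) =
          ((n : ℝ) / k) * ∑ i ∈ Finset.range k, X i ω - A := by
        field_simp
      have heq : ((n:ℝ)/k) * |∑ i ∈ Finset.range k, X i ω - k * (A/n)| =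
          |((n : ℝ) / k) * ∑ i ∈ Finset.range k, X i ω - A| := by
        rw [← heq0, abs_mul, abs_of_nonneg (show (0:ℝ) ≤ (n:ℝ)/k by positivity)]
      have h2 : d * A ≤ ((n:ℝ)/k) * |∑ i ∈ Finset.range k, X i ω - k * (A/n)| := by
        rw [heq]; exact h
      have h3 := mul_le_mul_of_nonneg_right h2 (show (0:ℝ) ≤ (k:ℝ)/n by positivity)
      have h4 : ((n:ℝ)/k) * |∑ i ∈ Finset.range k, X i ω - k * (A/n)| * ((k:ℝ)/n) =
          |∑ i ∈ Finset.range k, X i ω - k * (A/n)| := by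
        field_simp
      rw [h4] at h3
      have h5 : c₂ = d * A * ((k:ℝ)/n) := by rw [hc₂]; ring
      rw [Set.mem_setOf_eq, h5]
      linarith
  -- the two Chebyshev bounds
  have hb1 := cheb k₀ c₁ hc₁pos
  have hb2 := cheb k c₂ hc₂pos
  -- arithmetic bounds
  have hr₁ : (k₀:ℝ) * v / c₁ ^ 2 ≤ ε := by
    clear hb1 hb2 cheb hsub hSvar hSmean hSmem hvar hmean hid hindep hL2 hmeas X
    rw [div_le_iff₀ (pow_pos hc₁pos 2), hk₀', hc₁eq]
    have hb : ε * p^2 * v ≤ ε * p^2 * (A^2/(n:ℝ)^2) :=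
      mul_le_mul_of_nonneg_left hvle (by positivity)
    refine le_trans hb ?_
    rw [hAeq]
    have h6 : 1 ≤ (p^2 - ε*p)^2 := one_le_pow₀ hkey
    have lhs_eq : ε * p^2 * ((((n:ℝ)^2/p^3))^2/((n:ℝ))^2) = ε * (n:ℝ)^2 / p^4 := by
      field_simp
    have rhs_eq : ε * ((n:ℝ)*(p-ε)/p)^2 = ε * (n:ℝ)^2 * (p-ε)^2 / p^2 := by
      field_simp
    rw [lhs_eq, rhs_eq, div_le_div_iff₀ (pow_pos hp0 4) (pow_pos hp0 2)]
    have h7 := mul_le_mul_of_nonneg_left h6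
      (show (0:ℝ) ≤ ε*(n:ℝ)^2*p^2 by positivity)
    have h8 : ε*(n:ℝ)^2*p^2*((p^2-ε*p)^2) = ε*(n:ℝ)^2*(p-ε)^2*p^4 := by ring
    linarith [h7, h8]
  have hr₂ : (k:ℝ) * v / c₂ ^ 2 ≤ ε := by
    clear hr₁ hb1 hb2 cheb hsub hSvar hSmean hSmem hvar hmean hid hindep hL2 hmeas X
    rw [div_le_iff₀ (pow_pos hc₂pos 2), hc₂]
    have hb : (k:ℝ) * v ≤ (k:ℝ) * (A^2/(n:ℝ)^2) :=
      mul_le_mul_of_nonneg_left hvle (by positivity)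
    refine le_trans hb ?_
    have hεd2k : 1 ≤ ε * d^2 * k := by
      have hdd : ε * d^2 * k = (k:ℝ)/(ε*p^2) := by rw [hd']; field_simp
      rw [hdd, le_div_iff₀ (by positivity)]
      have : ε * p^2 ≤ (k:ℝ) := by rw [← hk₀']; exact_mod_cast hk
      linarith
    have hpos : (0:ℝ) ≤ A^2 * k / (n:ℝ)^2 := by positivity
    have h7 := mul_le_mul_of_nonneg_right hεd2k hpos
    have h8 : ε*d^2*(k:ℝ)*(A^2*(k:ℝ)/(n:ℝ)^2) = ε*(d*A*(k:ℝ)/(n:ℝ))^2 := by ring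
    have h9 : 1*(A^2*(k:ℝ)/(n:ℝ)^2) = (k:ℝ)*(A^2/(n:ℝ)^2) := by ring
    linarith [h7, h8, h9]
  -- combine
  calc ℙ {ω | (n : ℝ) ≤ ∑ i ∈ Finset.range k₀, X i ω ∨
        d * A ≤ |((n : ℝ) / k) * ∑ i ∈ Finset.range k, X i ω - A|}
      ≤ ℙ ({ω | c₁ ≤ |∑ i ∈ Finset.range k₀, X i ω - k₀ * (A/n)|} ∪
          {ω | c₂ ≤ |∑ i ∈ Finset.range k, X i ω - k * (A/n)|}) := measure_mono hsub
    _ ≤ ℙ {ω | c₁ ≤ |∑ i ∈ Finset.range k₀, X i ω - k₀ * (A/n)|} +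
        ℙ {ω | c₂ ≤ |∑ i ∈ Finset.range k, X i ω - k * (A/n)|} := measure_union_le _ _
    _ ≤ ENNReal.ofReal ((k₀:ℝ) * v / c₁^2) + ENNReal.ofReal ((k:ℝ) * v / c₂^2) :=
        add_le_add hb1 hb2
    _ ≤ ENNReal.ofReal ε + ENNReal.ofReal ε :=
        add_le_add (ENNReal.ofReal_le_ofReal hr₁) (ENNReal.ofReal_le_ofReal hr₂)
    _ = ENNReal.ofReal (2 * ε) := by
        rw [← ENNReal.ofReal_add hε0.le hε0.le, two_mul]
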